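/- The commutator width of the wreath product Z ≀ Z^d is exactly ⌈d/2⌉: every element of the derived subgroup is a product of ⌈d/2⌉ commutators, and there is an element of the derived subgroup that is not a product of fewer than ⌈d/2⌉ commutators (for d ≥ 1). -/

import Mathlib

open MonoidAlgebra
open scoped commutatorElement

/-- `AddAut A` as multiplicative automorphisms of `Multiplicative A`. -/
def addAutToMulAut (A : Type*) [AddGroup A] : Multiplicative (AddAut A) →* MulAut (Multiplicative A) where
  toFun e := AddEquiv.toMultiplicative (Multiplicative.toAdd e)
  map_one' := rfl
  map_mul' _ _ := rfl

/-- The action of `B` on (the additive group of) a commutative ring `R`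
through a homomorphism `ψ : B →* Rˣ`, by multiplication. -/
def ringMulAction {R : Type*} [CommRing R] {B : Type*} [CommGroup B] (ψ : B →* Rˣ) :
    B →* MulAut (Multiplicative R) :=
  (addAutToMulAut R).comp (AddAut.mulLeft.comp ψ)

/-- The semidirect product `R ⋊ B` where `B` acts on the additive group of the
commutative ring `R` by multiplication via `ψ : B →* Rˣ`. -/
abbrev RingSemidirect (R : Type*) [CommRing R] {B : Type*} [CommGroup B] (ψ : B →* Rˣ) :=
  SemidirectProduct (Multiplicative R) B (ringMulAction ψ)

/-- The element `(f, b)` of `R ⋊ B`. -/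
abbrev RingSemidirect.mk {R : Type*} [CommRing R] {B : Type*} [CommGroup B] (ψ : B →* Rˣ)
    (f : R) (b : B) : RingSemidirect R ψ :=
  ⟨Multiplicative.ofAdd f, b⟩

/-- The canonical homomorphism `B →* (ℤ[B])ˣ`, sending `b` to the monomial `Z^b`. -/
noncomputable abbrev zUnits (B : Type*) [CommGroup B] : B →* (MonoidAlgebra ℤ B)ˣ :=
  (MonoidAlgebra.of ℤ B).toHomUnits

/-- The wreath product `ℤ ≀ B`, realized as `ℤ[B] ⋊ B` with `B` acting by multiplication
by monomials. -/
abbrev ZWreath (B : Type*) [CommGroup B] := RingSemidirect (MonoidAlgebra ℤ B) (zUnits B)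

/-- The element `(f, b)` of `ℤ ≀ B = ℤ[B] ⋊ B`. -/
noncomputable abbrev ZWreath.mk {B : Type*} [CommGroup B] (f : MonoidAlgebra ℤ B) (b : B) : ZWreath B :=
  RingSemidirect.mk (zUnits B) f b


section Aux
variable {B : Type*} [CommGroup B]

lemma act_eq (b : B) (g : MonoidAlgebra ℤ B) :
    ringMulAction (zUnits B) b (Multiplicative.ofAdd g) =
      Multiplicative.ofAdd ((MonoidAlgebra.of ℤ B b) * g) := rfl

lemma mk_mul (f g : MonoidAlgebra ℤ B) (b c : B) :
    ZWreath.mk f b * ZWreath.mk g c = ZWreath.mk (f + MonoidAlgebra.of ℤ B b * g) (b * c) := rfl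

example (x : ZWreath B) : x = ZWreath.mk (Multiplicative.toAdd x.left) x.right := rfl

lemma act_eq' (b : B) (u : Multiplicative (MonoidAlgebra ℤ B)) :
    ringMulAction (zUnits B) b u =
      Multiplicative.ofAdd ((MonoidAlgebra.of ℤ B b) * Multiplicative.toAdd u) := rfl

lemma commutator_eq (x y : ZWreath B) :
    ⁅x, y⁆ = ZWreath.mk ((1 - MonoidAlgebra.of ℤ B y.right) * Multiplicative.toAdd x.left
      + (MonoidAlgebra.of ℤ B x.right - 1) * Multiplicative.toAdd y.left) 1 := by
  apply SemidirectProduct.ext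
  · show (⁅x,y⁆).left = Multiplicative.ofAdd _
    rw [commutatorElement_def]
    simp only [SemidirectProduct.mul_left, SemidirectProduct.inv_left, act_eq']
    apply Multiplicative.toAdd.injective
    simp only [toAdd_mul, toAdd_ofAdd, toAdd_inv, map_mul, map_sub, map_one]
    have hb : (MonoidAlgebra.of ℤ B x.right) * (MonoidAlgebra.of ℤ B x.right⁻¹) = 1 := by
      rw [← map_mul, mul_inv_cancel, map_one]
    have hc : (MonoidAlgebra.of ℤ B y.right) * (MonoidAlgebra.of ℤ B y.right⁻¹) = 1 := by
      rw [← map_mul, mul_inv_cancel, map_one]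
    set p := MonoidAlgebra.of ℤ B x.right
    set q := MonoidAlgebra.of ℤ B x.right⁻¹
    set r := MonoidAlgebra.of ℤ B y.right
    set s := MonoidAlgebra.of ℤ B y.right⁻¹
    set F := Multiplicative.toAdd x.left
    set G := Multiplicative.toAdd y.left
    simp only [SemidirectProduct.mul_right, SemidirectProduct.inv_right, map_mul]
    linear_combination (-(F*r) - G*r*s) * hb + (-G) * hc
  · show x.right * y.right * x.right⁻¹ * y.right⁻¹ = 1
    rw [mul_comm x.right y.right]
    group
section Helpers
variable {B : Type*} [CommGroup B]

lemma mk_right (f : MonoidAlgebra ℤ B) (b : B) : (ZWreath.mk f b).right = b := rfl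
lemma mk_left (f : MonoidAlgebra ℤ B) (b : B) :
    Multiplicative.toAdd (ZWreath.mk f b).left = f := rfl

lemma mk_one_mul (f g : MonoidAlgebra ℤ B) :
    ZWreath.mk f 1 * ZWreath.mk g 1 = ZWreath.mk (f + g) 1 := by
  rw [mk_mul, map_one, one_mul, one_mul]

lemma prod_mk {n : ℕ} (w : Fin n → MonoidAlgebra ℤ B) :
    (List.ofFn fun i => ZWreath.mk (w i) 1).prod = ZWreath.mk (∑ i, w i) 1 := by
  induction n with
  | zero => simp
  | succ n ih =>
    rw [List.ofFn_succ, List.prod_cons, ih (fun i => w i.succ), Fin.sum_univ_succ, mk_one_mul]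

lemma sum_pair {M : Type*} [AddCommMonoid M] (F : ℕ → M) (n : ℕ) :
    ∑ j ∈ Finset.range n, (F (2*j) + F (2*j+1)) = ∑ i ∈ Finset.range (2*n), F i := by
  induction n with
  | zero => simp
  | succ n ih =>
    have h2 : 2*(n+1) = (2*n+1)+1 := by ring
    rw [Finset.sum_range_succ, h2, Finset.sum_range_succ, Finset.sum_range_succ, ih,
      add_assoc]

end Helpers

section Zd
variable {d : ℕ}

abbrev Bd (d : ℕ) : Type := Multiplicative (Fin d → ℤ)

/-- standard generators -/
def egen {d : ℕ} (i : Fin d) : Bd d := Multiplicative.ofAdd (Pi.single i 1)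

/-- the augmentation ideal (span of the `z_i - 1`) -/
noncomputable def augI (d : ℕ) : Ideal (MonoidAlgebra ℤ (Bd d)) :=
  Ideal.span (Set.range fun i : Fin d => MonoidAlgebra.of ℤ (Bd d) (egen i) - 1)

lemma of_sub_one_mem (b : Bd d) : MonoidAlgebra.of ℤ (Bd d) b - 1 ∈ augI d := by
  let S : Subgroup (Bd d) :=
    { carrier := {b | MonoidAlgebra.of ℤ (Bd d) b - 1 ∈ augI d}
      one_mem' := by
        show MonoidAlgebra.of ℤ (Bd d) 1 - 1 ∈ augI d
        rw [map_one, sub_self]; exact zero_mem _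
      mul_mem' := by
        intro a b ha hb
        show MonoidAlgebra.of ℤ (Bd d) (a * b) - 1 ∈ augI d
        have h : MonoidAlgebra.of ℤ (Bd d) (a * b) - 1 =
            MonoidAlgebra.of ℤ (Bd d) a * (MonoidAlgebra.of ℤ (Bd d) b - 1) +
            (MonoidAlgebra.of ℤ (Bd d) a - 1) := by
          rw [map_mul]; ring
        rw [h]
        exact Ideal.add_mem _ (Ideal.mul_mem_left _ _ hb) ha
      inv_mem' := by
        intro a ha
        show MonoidAlgebra.of ℤ (Bd d) a⁻¹ - 1 ∈ augI d
        have h1 : MonoidAlgebra.of ℤ (Bd d) a⁻¹ * MonoidAlgebra.of ℤ (Bd d) a = 1 := by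
          rw [← map_mul, inv_mul_cancel, map_one]
        have h : MonoidAlgebra.of ℤ (Bd d) a⁻¹ - 1 =
            (-(MonoidAlgebra.of ℤ (Bd d) a⁻¹)) * (MonoidAlgebra.of ℤ (Bd d) a - 1) := by
          rw [neg_mul, mul_sub, h1, mul_one, neg_sub]
        rw [h]
        exact Ideal.mul_mem_left _ _ ha }
  have hgen : ∀ i : Fin d, egen i ∈ S := by
    intro i
    show MonoidAlgebra.of ℤ (Bd d) (egen i) - 1 ∈ augI d
    exact Ideal.subset_span (Set.mem_range_self i)
  show b ∈ S
  have hb : b = ∏ i : Fin d, (egen i) ^ (Multiplicative.toAdd b i) := by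
    apply Multiplicative.toAdd.injective
    rw [toAdd_prod]
    have h : ∀ i : Fin d, Multiplicative.toAdd ((egen i) ^ (Multiplicative.toAdd b i)) =
        Pi.single i (Multiplicative.toAdd b i) := by
      intro i
      rw [egen, ← ofAdd_zsmul, toAdd_ofAdd]
      ext j
      simp [Pi.single_apply]
    rw [Finset.sum_congr rfl fun i _ => h i]
    exact (Finset.univ_sum_single (Multiplicative.toAdd b)).symm
  rw [hb]
  exact Subgroup.prod_mem S fun i _ => Subgroup.zpow_mem S (hgen i) _

/-- the subgroup of base elements with coordinate in the augmentation ideal -/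
noncomputable def Kgrp (d : ℕ) : Subgroup (ZWreath (Bd d)) where
  carrier := {x | x.right = 1 ∧ Multiplicative.toAdd x.left ∈ augI d}
  one_mem' := by
    refine ⟨rfl, ?_⟩
    show Multiplicative.toAdd (1 : Multiplicative (MonoidAlgebra ℤ (Bd d))) ∈ augI d
    simpa using Ideal.zero_mem _
  mul_mem' := by
    rintro a b ⟨ha1, ha2⟩ ⟨hb1, hb2⟩
    refine ⟨by simp [SemidirectProduct.mul_right, ha1, hb1], ?_⟩
    show Multiplicative.toAdd (a * b).left ∈ augI d
    rw [SemidirectProduct.mul_left, ha1, map_one]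
    rw [show ((1 : MulAut (Multiplicative (MonoidAlgebra ℤ (Bd d)))) b.left) = b.left from rfl,
      toAdd_mul]
    exact Ideal.add_mem _ ha2 hb2
  inv_mem' := by
    rintro a ⟨ha1, ha2⟩
    refine ⟨by simp [SemidirectProduct.inv_right, ha1], ?_⟩
    show Multiplicative.toAdd a⁻¹.left ∈ augI d
    rw [SemidirectProduct.inv_left, ha1, inv_one, map_one]
    rw [show ((1 : MulAut (Multiplicative (MonoidAlgebra ℤ (Bd d)))) a.left⁻¹) = a.left⁻¹ from rfl,
      toAdd_inv]
    exact neg_mem ha2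

lemma commutator_le_Kgrp :
    commutator (ZWreath (Bd d)) ≤ Kgrp d := by
  rw [commutator_def, Subgroup.commutator_le]
  intro x _ y _
  rw [commutator_eq]
  constructor
  · rfl
  · rw [mk_left]
    refine Ideal.add_mem _ ?_ ?_
    · refine Ideal.mul_mem_right _ _ ?_
      have h := neg_mem (of_sub_one_mem y.right)
      simpa using h
    · exact Ideal.mul_mem_right _ _ (of_sub_one_mem x.right)

end Zd
section Part1
variable {d : ℕ}

lemma part1 (x : ZWreath (Bd d)) (hx : x ∈ commutator (ZWreath (Bd d))) :
    ∃ g h : Fin ((d + 1) / 2) → ZWreath (Bd d),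
      x = (List.ofFn fun i => ⁅g i, h i⁆).prod := by
  obtain ⟨hr, hf⟩ := commutator_le_Kgrp hx
  rw [augI] at hf
  obtain ⟨c, hc⟩ := (Submodule.mem_span_range_iff_exists_fun _).mp hf
  set n := (d + 1) / 2 with hn
  -- extended coefficient and generator sequences
  set cN : ℕ → MonoidAlgebra ℤ (Bd d) := fun k => if h : k < d then c ⟨k, h⟩ else 0 with hcN
  set eN : ℕ → Bd d := fun k => if h : k < d then egen ⟨k, h⟩ else 1 with heN
  refine ⟨fun j => ZWreath.mk (-(cN (2*(j:ℕ)+1))) (eN (2*(j:ℕ))),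
          fun j => ZWreath.mk (cN (2*(j:ℕ))) (eN (2*(j:ℕ)+1)), ?_⟩
  have hcomm : ∀ j : Fin n,
      ⁅ZWreath.mk (-(cN (2*(j:ℕ)+1))) (eN (2*(j:ℕ))), ZWreath.mk (cN (2*(j:ℕ))) (eN (2*(j:ℕ)+1))⁆
        = ZWreath.mk (cN (2*(j:ℕ)) * (MonoidAlgebra.of ℤ (Bd d) (eN (2*(j:ℕ))) - 1)
            + cN (2*(j:ℕ)+1) * (MonoidAlgebra.of ℤ (Bd d) (eN (2*(j:ℕ)+1)) - 1)) 1 := by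
    intro j
    rw [commutator_eq, mk_left, mk_left, mk_right, mk_right]
    congr 1
    ring
  have hprod : (List.ofFn fun j : Fin n =>
      ⁅ZWreath.mk (-(cN (2*(j:ℕ)+1))) (eN (2*(j:ℕ))), ZWreath.mk (cN (2*(j:ℕ))) (eN (2*(j:ℕ)+1))⁆).prod
      = ZWreath.mk (∑ j : Fin n, (cN (2*(j:ℕ)) * (MonoidAlgebra.of ℤ (Bd d) (eN (2*(j:ℕ))) - 1)
            + cN (2*(j:ℕ)+1) * (MonoidAlgebra.of ℤ (Bd d) (eN (2*(j:ℕ)+1)) - 1))) 1 := by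
    simp only [hcomm]
    rw [prod_mk]
  rw [hprod]
  -- now identify the sum with `toAdd x.left`
  have hsum : (∑ j : Fin n, (cN (2*(j:ℕ)) * (MonoidAlgebra.of ℤ (Bd d) (eN (2*(j:ℕ))) - 1)
            + cN (2*(j:ℕ)+1) * (MonoidAlgebra.of ℤ (Bd d) (eN (2*(j:ℕ)+1)) - 1)))
      = Multiplicative.toAdd x.left := by
    set F : ℕ → MonoidAlgebra ℤ (Bd d) :=
      fun k => cN k * (MonoidAlgebra.of ℤ (Bd d) (eN k) - 1) with hF
    have h1 : (∑ j : Fin n, (F (2*(j:ℕ)) + F (2*(j:ℕ)+1)))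
        = ∑ j ∈ Finset.range n, (F (2*j) + F (2*j+1)) :=
      Fin.sum_univ_eq_sum_range (fun k => F (2*k) + F (2*k+1)) n
    have h2 : ∑ i ∈ Finset.range (2*n), F i = ∑ i ∈ Finset.range d, F i := by
      symm
      apply Finset.sum_subset
      · apply Finset.range_subset_range.mpr
        omega
      · intro k _ hk
        rw [Finset.mem_range, not_lt] at hk
        have : ¬ k < d := by omega
        simp [hF, hcN, this]
    have h3 : ∑ i ∈ Finset.range d, F i = ∑ i : Fin d, F ↑i :=
      (Fin.sum_univ_eq_sum_range (fun k => F k) d).symm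
    have h4 : ∑ i : Fin d, F ↑i = ∑ i : Fin d,
        c i • (MonoidAlgebra.of ℤ (Bd d) (egen i) - 1) := by
      apply Finset.sum_congr rfl
      intro i _
      have hi : ((i : ℕ) < d) := i.isLt
      simp only [hF, hcN, heN, dif_pos hi, Fin.eta, smul_eq_mul]
    show (∑ j : Fin n, (F (2*(j:ℕ)) + F (2*(j:ℕ)+1))) = _
    rw [h1, sum_pair, h2, h3, h4, hc]
  rw [hsum]
  conv_lhs => rw [show x = ZWreath.mk (Multiplicative.toAdd x.left) x.right from rfl, hr]

end Part1
section Part2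
variable {d : ℕ}

/-- the witness element -/
noncomputable def witness (d : ℕ) : ZWreath (Bd d) :=
  ZWreath.mk (∑ i : Fin d, (MonoidAlgebra.of ℤ (Bd d) (egen i) - 1)) 1

lemma single_comm_mem (i : Fin d) :
    ZWreath.mk (MonoidAlgebra.of ℤ (Bd d) (egen i) - 1) 1 ∈ commutator (ZWreath (Bd d)) := by
  have h : ⁅ZWreath.mk 0 (egen i), ZWreath.mk 1 (1 : Bd d)⁆
      = ZWreath.mk (MonoidAlgebra.of ℤ (Bd d) (egen i) - 1) 1 := by
    rw [commutator_eq, mk_left, mk_left, mk_right, mk_right]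
    congr 1
    rw [map_one]
    ring
  rw [← h, commutator_def]
  exact Subgroup.commutator_mem_commutator (Subgroup.mem_top _) (Subgroup.mem_top _)

lemma witness_mem : witness d ∈ commutator (ZWreath (Bd d)) := by
  let C : Subgroup (Multiplicative (MonoidAlgebra ℤ (Bd d))) :=
    Subgroup.comap (SemidirectProduct.inl :
      Multiplicative (MonoidAlgebra ℤ (Bd d)) →* ZWreath (Bd d)) (commutator (ZWreath (Bd d)))
  have hC : ∀ i : Fin d,
      Multiplicative.ofAdd (MonoidAlgebra.of ℤ (Bd d) (egen i) - 1) ∈ C := by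
    intro i
    show SemidirectProduct.inl _ ∈ commutator (ZWreath (Bd d))
    exact single_comm_mem i
  have h2 : Multiplicative.ofAdd (∑ i : Fin d, (MonoidAlgebra.of ℤ (Bd d) (egen i) - 1)) ∈ C := by
    rw [ofAdd_sum]
    exact Subgroup.prod_mem C fun i _ => hC i
  exact h2

lemma witness_not_small (m : ℕ) (hm : m < (d + 1) / 2) (hd : 1 ≤ d)
    (g h : Fin m → ZWreath (Bd d))
    (hx : witness d = (List.ofFn fun i => ⁅g i, h i⁆).prod) : False := by
  have hmd : 2 * m < d := by omega
  set w : Fin m → MonoidAlgebra ℤ (Bd d) := fun j =>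
    (1 - MonoidAlgebra.of ℤ (Bd d) (h j).right) * Multiplicative.toAdd (g j).left
      + (MonoidAlgebra.of ℤ (Bd d) (g j).right - 1) * Multiplicative.toAdd (h j).left with hw
  have hprod : (List.ofFn fun i => ⁅g i, h i⁆).prod = ZWreath.mk (∑ j : Fin m, w j) 1 := by
    simp only [commutator_eq]
    exact prod_mk _
  have hsum : (∑ i : Fin d, (MonoidAlgebra.of ℤ (Bd d) (egen i) - 1)) = ∑ j : Fin m, w j := by
    have h1 := hx.trans hprod
    rw [witness] at h1
    exact congrArg (fun z : ZWreath (Bd d) => Multiplicative.toAdd z.left) h1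
  set A : Fin m → Fin d → ℤ := fun j => Multiplicative.toAdd (g j).right with hA
  set A' : Fin m → Fin d → ℤ := fun j => Multiplicative.toAdd (h j).right with hA'
  set lmap : (Fin d → ℚ) →ₗ[ℚ] (Fin m → ℚ × ℚ) :=
    LinearMap.pi (fun j => LinearMap.prod
      (∑ i : Fin d, (A j i : ℚ) • LinearMap.proj i)
      (∑ i : Fin d, (A' j i : ℚ) • LinearMap.proj i)) with hlmap
  have hni : ¬ Function.Injective lmap := by
    intro hinj
    have hle := LinearMap.finrank_le_finrank_of_injective hinj
    rw [Module.finrank_pi, Module.finrank_pi_fintype] at hle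
    simp only [Module.finrank_prod, Module.finrank_self, Fintype.card_fin,
      Finset.sum_const, Finset.card_univ, smul_eq_mul] at hle
    omega
  rw [← LinearMap.ker_eq_bot] at hni
  obtain ⟨v, hvmem, hv0⟩ := (Submodule.ne_bot_iff _).mp hni
  rw [LinearMap.mem_ker] at hvmem
  have hker : ∀ j : Fin m,
      (∑ i : Fin d, (A j i : ℚ) * v i) = 0 ∧ (∑ i : Fin d, (A' j i : ℚ) * v i) = 0 := by
    intro j
    have h1 := congrFun hvmem j
    rw [hlmap] at h1
    simp only [LinearMap.pi_apply, LinearMap.prod_apply, Pi.prod, Function.prod_apply, LinearMap.sum_apply,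
      LinearMap.smul_apply, LinearMap.proj_apply, smul_eq_mul, Pi.zero_apply,
      Prod.mk_eq_zero] at h1
    exact h1
  set L : (Fin d → ℤ) →+ ℚ :=
    { toFun := fun a => ∑ i : Fin d, (a i : ℚ) * v i
      map_zero' := by simp
      map_add' := by
        intro a b
        show (∑ i : Fin d, (((a + b) i : ℤ) : ℚ) * v i)
          = (∑ i : Fin d, ((a i : ℚ) * v i)) + ∑ i : Fin d, ((b i : ℚ) * v i)
        rw [← Finset.sum_add_distrib]
        apply Finset.sum_congr rfl
        intro i _
        rw [Pi.add_apply]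
        push_cast
        ring } with hL
  set φ : Bd d →* Multiplicative ℚ := AddMonoidHom.toMultiplicative L with hφ
  set π := MonoidAlgebra.mapDomainRingHom ℤ φ with hπ
  have hπof : ∀ b : Bd d, π (MonoidAlgebra.of ℤ (Bd d) b) = MonoidAlgebra.single (φ b) 1 := by
    intro b
    rw [MonoidAlgebra.of_apply, hπ, MonoidAlgebra.mapDomainRingHom_apply]
    exact MonoidAlgebra.mapDomain_single
  have hφg : ∀ j : Fin m, φ ((g j).right) = 1 := by
    intro j
    apply Multiplicative.toAdd.injective
    show L (Multiplicative.toAdd ((g j).right)) = Multiplicative.toAdd (1 : Multiplicative ℚ)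
    simpa [hL, hA] using (hker j).1
  have hφh : ∀ j : Fin m, φ ((h j).right) = 1 := by
    intro j
    apply Multiplicative.toAdd.injective
    show L (Multiplicative.toAdd ((h j).right)) = Multiplicative.toAdd (1 : Multiplicative ℚ)
    simpa [hL, hA'] using (hker j).2
  have hπw : ∀ j : Fin m, π (w j) = 0 := by
    intro j
    rw [hw]
    simp only [map_add, map_mul, map_sub, map_one, hπof, hφg j, hφh j]
    rw [← MonoidAlgebra.one_def]
    ring
  have hπf : π (∑ i : Fin d, (MonoidAlgebra.of ℤ (Bd d) (egen i) - 1)) = 0 := by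
    rw [hsum, map_sum]
    exact Finset.sum_eq_zero fun j _ => hπw j
  have hπf2 : π (∑ i : Fin d, (MonoidAlgebra.of ℤ (Bd d) (egen i) - 1))
      = ∑ i : Fin d, (MonoidAlgebra.single (φ (egen i)) (1:ℤ) - 1) := by
    rw [map_sum]
    apply Finset.sum_congr rfl
    intro i _
    rw [map_sub, map_one, hπof]
  set ev : MonoidAlgebra ℤ (Multiplicative ℚ) →+ ℤ :=
    (Finsupp.applyAddHom (1 : Multiplicative ℚ)).comp
      (MonoidAlgebra.coeffAddEquiv : MonoidAlgebra ℤ (Multiplicative ℚ) ≃+ _).toAddMonoidHom with hev'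
  have hterm : ∀ i : Fin d, ev (MonoidAlgebra.single (φ (egen i)) (1:ℤ) - 1)
      = (if φ (egen i) = 1 then (1:ℤ) else 0) - 1 := by
    intro i
    rw [map_sub]
    have e1 : ev (MonoidAlgebra.single (φ (egen i)) (1:ℤ))
        = if φ (egen i) = 1 then (1:ℤ) else 0 := Finsupp.single_apply
    have e2 : ev (1 : MonoidAlgebra ℤ (Multiplicative ℚ)) = 1 := by
      show ((1 : MonoidAlgebra ℤ (Multiplicative ℚ))).coeff 1 = 1
      exact MonoidAlgebra.coeff_one_one
    rw [e1, e2]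
  have hev : ∑ i : Fin d, ((if φ (egen i) = 1 then (1:ℤ) else 0) - 1) = 0 := by
    have h1 := congrArg ev (hπf2.symm.trans hπf)
    rw [map_sum, map_zero] at h1
    exact (Finset.sum_congr rfl fun i _ => (hterm i).symm).trans h1
  have hall : ∀ i : Fin d, φ (egen i) = 1 := by
    intro i
    have hnp : ∀ i ∈ Finset.univ (α := Fin d),
        ((if φ (egen i) = 1 then (1:ℤ) else 0) - 1) ≤ 0 := by
      intro i _
      split <;> norm_num
    have h0 := (Finset.sum_eq_zero_iff_of_nonpos hnp).mp hev i (Finset.mem_univ i)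
    by_contra hne
    rw [if_neg hne] at h0
    norm_num at h0
  have hvz : v = 0 := by
    funext i
    have h1 : L (Pi.single i 1) = 0 := by
      have := congrArg Multiplicative.toAdd (hall i)
      exact this
    have h2 : L (Pi.single i 1) = v i := by
      show (∑ k : Fin d, ((Pi.single i 1 : Fin d → ℤ) k : ℚ) * v k) = v i
      rw [Finset.sum_eq_single i]
      · simp
      · intro k _ hk
        simp [Pi.single_apply, hk]
      · intro hh
        exact absurd (Finset.mem_univ i) hh
    rw [h2] at h1
    simpa using h1
  exact hv0 hvz

end Part2

end Aux

/-- The commutator width of `ℤ ≀ ℤ^d` is exactly `⌈d/2⌉`: every element of the derived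
subgroup is a product of `⌈d/2⌉` commutators, and some element of the derived subgroup is
not a product of fewer commutators. -/
theorem commutatorWidth_wreath (d : ℕ) (hd : 1 ≤ d) :
    (∀ x ∈ commutator (ZWreath (Multiplicative (Fin d → ℤ))),
      ∃ g h : Fin ((d + 1) / 2) → ZWreath (Multiplicative (Fin d → ℤ)),
        x = (List.ofFn fun i => ⁅g i, h i⁆).prod) ∧
    (∃ x ∈ commutator (ZWreath (Multiplicative (Fin d → ℤ))),
      ∀ m < (d + 1) / 2,
        ¬ ∃ g h : Fin m → ZWreath (Multiplicative (Fin d → ℤ)),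
          x = (List.ofFn fun i => ⁅g i, h i⁆).prod) := by
  constructor
  · intro x hx
    exact part1 x hx
  · refine ⟨witness d, witness_mem, ?_⟩
    rintro m hm ⟨g, h, hx⟩
    exact witness_not_small m hm hd g h hx
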